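/- The function G₁ on the open unit ball {ξ ∈ ℝ³ : |ξ| < 1} defined by G₁(ξ) = 64π + 32π/(1−|ξ|²) − 48π |ξ|^{−1} log((1+|ξ|)/(1−|ξ|)) − 128π log(1−|ξ|²) for ξ ≠ 0 and G₁(0) = 0 is smooth and strictly convex on {ξ ∈ ℝ³ : |ξ| < 1}. -/

import Mathlib

open Real
open scoped Classical

/-- The leading-order reduced Willmore energy of on-center coordinate spheres:
`G₁(ξ) = 64π + 32π/(1−|ξ|²) − 48π|ξ|⁻¹ log((1+|ξ|)/(1−|ξ|)) − 128π log(1−|ξ|²)`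
for `ξ ≠ 0`, and `G₁(0) = 0`. -/
noncomputable def G1 (ξ : EuclideanSpace ℝ (Fin 3)) : ℝ :=
  if ξ = 0 then 0 else
    64 * π + 32 * π / (1 - ‖ξ‖ ^ 2)
      - 48 * π * ‖ξ‖⁻¹ * Real.log ((1 + ‖ξ‖) / (1 - ‖ξ‖))
      - 128 * π * Real.log (1 - ‖ξ‖ ^ 2)

/-- Coefficients of the power series of `G₁` in `t = ‖ξ‖²`. -/
noncomputable def aaG1 : ℕ → ℝ :=
  fun k => if k = 0 then 0 else 32 * π - 96 * π / (2 * (k : ℝ) + 1) + 128 * π / (k : ℝ)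

lemma aaG1_zero : aaG1 0 = 0 := by simp [aaG1]

lemma aaG1_nonneg (k : ℕ) : 0 ≤ aaG1 k := by
  unfold aaG1
  split
  · exact le_refl 0
  · rename_i hk
    have hk1 : (1 : ℝ) ≤ (k : ℝ) := by exact_mod_cast Nat.one_le_iff_ne_zero.2 hk
    have hπ := Real.pi_pos
    have h1 : 96 * π / (2 * (k : ℝ) + 1) ≤ 32 * π := by
      rw [div_le_iff₀ (by linarith)]
      nlinarith
    have h2 : 0 ≤ 128 * π / (k : ℝ) := by positivity
    linarith

lemma aaG1_le (k : ℕ) : |aaG1 k| ≤ 160 * π := by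
  have hπ := Real.pi_pos
  rw [abs_of_nonneg (aaG1_nonneg k)]
  unfold aaG1
  split
  · linarith
  · rename_i hk
    have hk1 : (1 : ℝ) ≤ (k : ℝ) := by exact_mod_cast Nat.one_le_iff_ne_zero.2 hk
    have h2 : 128 * π / (k : ℝ) ≤ 128 * π := by
      rw [div_le_iff₀ (by linarith)]
      nlinarith
    have h1 : 0 ≤ 96 * π / (2 * (k : ℝ) + 1) := by positivity
    linarith

lemma aaG1_one : aaG1 1 = 128 * π := by
  unfold aaG1
  norm_num
  ring

/-- The power series. -/
noncomputable def pserG1 : FormalMultilinearSeries ℝ ℝ ℝ :=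
  FormalMultilinearSeries.ofScalars ℝ aaG1

/-- The radial profile function. -/
noncomputable def FG1 : ℝ → ℝ := pserG1.sum

lemma FG1_eq (t : ℝ) : FG1 t = ∑' k, aaG1 k * t ^ k := by
  unfold FG1 FormalMultilinearSeries.sum
  exact tsum_congr fun n => by
    rw [pserG1, FormalMultilinearSeries.ofScalars_apply_eq, smul_eq_mul]

lemma summable_aaG1 {t : ℝ} (ht0 : 0 ≤ t) (ht1 : t < 1) :
    Summable fun k => aaG1 k * t ^ k := by
  refine Summable.of_norm_bounded ((summable_geometric_of_lt_one ht0 ht1).mul_left (160 * π))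
    fun k => ?_
  rw [norm_mul, norm_pow, Real.norm_eq_abs, Real.norm_eq_abs, abs_of_nonneg ht0]
  exact mul_le_mul_of_nonneg_right (aaG1_le k) (by positivity)

lemma hasSum_FG1 {r : ℝ} (hr0 : 0 < r) (hr1 : r < 1) :
    HasSum (fun k => aaG1 k * (r ^ 2) ^ k)
      (64 * π + 32 * π / (1 - r ^ 2)
        - 48 * π * r⁻¹ * Real.log ((1 + r) / (1 - r))
        - 128 * π * Real.log (1 - r ^ 2)) := by
  set t : ℝ := r ^ 2 with ht
  have ht0 : 0 < t := by positivity
  have ht1 : t < 1 := by nlinarith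
  have htabs : |t| < 1 := by rw [abs_of_pos ht0]; exact ht1
  -- geometric part
  have hA : HasSum (fun k : ℕ => 32 * π * t ^ k) (32 * π * (1 - t)⁻¹) := by
    simpa [div_eq_mul_inv] using (hasSum_geometric_of_lt_one ht0.le ht1).mul_left (32 * π)
  -- artanh part
  have hB0 := hasSum_log_sub_log_of_abs_lt_one (x := r) (by rw [abs_of_pos hr0]; exact hr1)
  have hB : HasSum (fun k : ℕ => 96 * π * t ^ k / (2 * (k : ℝ) + 1))
      (48 * π * r⁻¹ * (Real.log (1 + r) - Real.log (1 - r))) := by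
    have := hB0.mul_left (48 * π * r⁻¹)
    refine this.congr_fun fun k => ?_
    have hrpow : r ^ (2 * k + 1) = t ^ k * r := by
      rw [pow_succ, pow_mul]
    rw [hrpow]
    field_simp
    ring
  -- log part
  have hC0 := (hasSum_pow_div_log_of_abs_lt_one htabs).mul_left (128 * π)
  set CC : ℕ → ℝ := fun k => if k = 0 then 0 else 128 * π * t ^ k / (k : ℝ) with hCC
  have hC : HasSum CC (128 * π * (-Real.log (1 - t))) := by
    have h1 : HasSum (fun n : ℕ => CC (n + 1)) (128 * π * (-Real.log (1 - t))) := by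
      refine hC0.congr_fun fun n => ?_
      simp only [hCC, Nat.succ_ne_zero, if_false]
      push_cast
      ring
    have := (hasSum_nat_add_iff (f := CC) 1).1 h1
    simpa [hCC] using this
  -- combine
  have hABC := (hA.sub hB).add hC
  have hupd := hABC.update 0 0
  have hfun : Function.update
      (fun k : ℕ => 32 * π * t ^ k - 96 * π * t ^ k / (2 * (k : ℝ) + 1) + CC k) 0 0
      = fun k => aaG1 k * t ^ k := by
    funext k
    rcases Nat.eq_zero_or_pos k with hk | hk
    · subst hk; simp [aaG1_zero]
    · have hk' : k ≠ 0 := hk.ne'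
      rw [Function.update_of_ne hk']
      simp only [hCC, aaG1, if_neg hk']
      have hkR : (0 : ℝ) < (k : ℝ) := by exact_mod_cast hk
      field_simp
  rw [hfun] at hupd
  convert hupd using 1
  · rfl
  have h0 : (32 * π * t ^ 0 - 96 * π * t ^ 0 / (2 * ((0 : ℕ) : ℝ) + 1) + CC 0) = -(64 * π) := by
    simp [hCC]
    ring
  rw [h0]
  have hlog : Real.log ((1 + r) / (1 - r)) = Real.log (1 + r) - Real.log (1 - r) :=
    Real.log_div (by linarith) (by linarith)
  rw [hlog]
  have h1t : (1 : ℝ) - t ≠ 0 := by linarith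
  field_simp
  ring

lemma G1_eq_FG1 {ξ : EuclideanSpace ℝ (Fin 3)} (hξ : ξ ∈ Metric.ball (0 : EuclideanSpace ℝ (Fin 3)) 1) :
    G1 ξ = FG1 (‖ξ‖ ^ 2) := by
  rw [mem_ball_zero_iff] at hξ
  by_cases h0 : ξ = 0
  · subst h0
    rw [G1, if_pos rfl, FG1_eq]
    simp only [norm_zero]
    rw [tsum_eq_single 0 (fun k hk => by simp [zero_pow hk])]
    simp [aaG1_zero]
  · have hr0 : 0 < ‖ξ‖ := norm_pos_iff.2 h0
    rw [G1, if_neg h0, FG1_eq, (hasSum_FG1 hr0 hξ).tsum_eq]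

lemma one_le_radius : 1 ≤ pserG1.radius := by
  apply FormalMultilinearSeries.le_radius_of_bound _ (160 * π) (r := 1)
  intro n
  rw [pserG1, FormalMultilinearSeries.ofScalars_norm]
  simpa [Real.norm_eq_abs] using aaG1_le n

lemma contDiffOn_FG1 : ContDiffOn ℝ (⊤ : ℕ∞) FG1 (Metric.ball (0 : ℝ) 1) := by
  intro t ht
  have hmem : t ∈ Metric.eball (0 : ℝ) pserG1.radius := by
    rw [EMetric.mem_ball, edist_zero_right]
    refine lt_of_lt_of_le ?_ one_le_radius
    rw [enorm_eq_nnnorm, ← ENNReal.coe_one, ENNReal.coe_lt_coe, ← NNReal.coe_lt_coe, coe_nnnorm, NNReal.coe_one]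
    simpa [Real.norm_eq_abs] using mem_ball_zero_iff.1 ht
  have hps : HasFPowerSeriesOnBall pserG1.sum pserG1 0 pserG1.radius :=
    pserG1.hasFPowerSeriesOnBall (lt_of_lt_of_le one_pos one_le_radius)
  exact ((hps.analyticAt_of_mem hmem).contDiffAt).contDiffWithinAt

lemma convexOn_FG1 : ConvexOn ℝ (Set.Ico (0 : ℝ) 1) FG1 := by
  refine ⟨convex_Ico 0 1, fun x hx y hy s t hs ht hst => ?_⟩
  simp only [smul_eq_mul]
  have hmem : s * x + t * y ∈ Set.Ico (0 : ℝ) 1 :=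
    (convex_Ico (0:ℝ) 1) hx hy hs ht hst
  have hsx : Summable fun k => aaG1 k * x ^ k := summable_aaG1 hx.1 hx.2
  have hsy : Summable fun k => aaG1 k * y ^ k := summable_aaG1 hy.1 hy.2
  have hsc : Summable fun k => aaG1 k * (s * x + t * y) ^ k := summable_aaG1 hmem.1 hmem.2
  rw [FG1_eq, FG1_eq, FG1_eq]
  calc ∑' k, aaG1 k * (s * x + t * y) ^ k
      ≤ ∑' k, (s * (aaG1 k * x ^ k) + t * (aaG1 k * y ^ k)) := by
        refine Summable.tsum_le_tsum (fun k => ?_) hsc ((hsx.mul_left s).add (hsy.mul_left t))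
        have := (convexOn_pow k).2 hx.1 hy.1 hs ht hst
        simp only [smul_eq_mul] at this
        calc aaG1 k * (s * x + t * y) ^ k ≤ aaG1 k * (s * x ^ k + t * y ^ k) :=
              mul_le_mul_of_nonneg_left this (aaG1_nonneg k)
          _ = s * (aaG1 k * x ^ k) + t * (aaG1 k * y ^ k) := by ring
    _ = s * ∑' k, aaG1 k * x ^ k + t * ∑' k, aaG1 k * y ^ k := by
        rw [Summable.tsum_add (hsx.mul_left s) (hsy.mul_left t), tsum_mul_left, tsum_mul_left]

lemma strictMonoOn_FG1 : StrictMonoOn FG1 (Set.Ico (0 : ℝ) 1) := by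
  intro x hx y hy hxy
  rw [FG1_eq, FG1_eq]
  refine Summable.tsum_lt_tsum_of_nonneg (fun k => ?_) (fun k => ?_) (i := 1) ?_
    (summable_aaG1 hy.1 hy.2)
  · exact mul_nonneg (aaG1_nonneg k) (pow_nonneg hx.1 k)
  · exact mul_le_mul_of_nonneg_left (pow_le_pow_left₀ hx.1 hxy.le k) (aaG1_nonneg k)
  · have hπ := Real.pi_pos
    simp only [pow_one]
    have : (0:ℝ) < aaG1 1 := by rw [aaG1_one]; positivity
    exact mul_lt_mul_of_pos_left hxy this

lemma strictConvexOn_normsq :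
    StrictConvexOn ℝ (Metric.ball (0 : EuclideanSpace ℝ (Fin 3)) 1)
      (fun ξ => ‖ξ‖ ^ 2) := by
  refine ⟨convex_ball _ _, fun x hx y hy hxy s t hs ht hst => ?_⟩
  simp only [smul_eq_mul]
  have key : (0:ℝ) < s * t * ‖x - y‖ ^ 2 := by
    have h1 : (0:ℝ) < ‖x - y‖ ^ 2 :=
      pow_pos (norm_pos_iff.2 (sub_ne_zero.2 hxy)) 2
    exact mul_pos (mul_pos hs ht) h1
  have hexp : ‖s • x + t • y‖ ^ 2
      = s ^ 2 * ‖x‖ ^ 2 + 2 * (s * t) * (inner ℝ x y : ℝ) + t ^ 2 * ‖y‖ ^ 2 := by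
    rw [norm_add_sq_real, norm_smul, norm_smul, real_inner_smul_left, real_inner_smul_right,
      mul_pow, mul_pow, Real.norm_eq_abs, Real.norm_eq_abs, abs_of_pos hs, abs_of_pos ht]
    ring
  have hsub : ‖x - y‖ ^ 2 = ‖x‖ ^ 2 - 2 * (inner ℝ x y : ℝ) + ‖y‖ ^ 2 := norm_sub_sq_real x y
  rw [hexp]
  have h2 : s * ‖x‖ ^ 2 + t * ‖y‖ ^ 2
      - (s ^ 2 * ‖x‖ ^ 2 + 2 * (s * t) * (inner ℝ x y : ℝ) + t ^ 2 * ‖y‖ ^ 2)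
      = s * t * ‖x - y‖ ^ 2 := by
    have ht' : t = 1 - s := by linarith
    rw [ht', hsub]
    ring
  linarith [key, h2]

lemma comp_strictConvexOn {E : Type*} [NormedAddCommGroup E] [NormedSpace ℝ E]
    {S : Set E} {T : Set ℝ} {φ : ℝ → ℝ} {q : E → ℝ}
    (hT : Convex ℝ T) (hφc : ConvexOn ℝ T φ) (hφm : StrictMonoOn φ T)
    (hq : StrictConvexOn ℝ S q) (hmap : Set.MapsTo q S T) :
    StrictConvexOn ℝ S (fun x => φ (q x)) := by
  refine ⟨hq.1, fun x hx y hy hxy s t hs ht hst => ?_⟩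
  have h1 : q (s • x + t • y) < s * q x + t * q y := by
    simpa using hq.2 hx hy hxy hs ht hst
  have m1 : q (s • x + t • y) ∈ T := hmap (hq.1 hx hy hs.le ht.le hst)
  have m2 : s * q x + t * q y ∈ T := by
    simpa using hT (hmap hx) (hmap hy) hs.le ht.le hst
  calc φ (q (s • x + t • y)) < φ (s * q x + t * q y) := hφm m1 m2 h1
    _ ≤ s * φ (q x) + t * φ (q y) := by
        simpa using hφc.2 (hmap hx) (hmap hy) hs.le ht.le hst
  -- done

/-- `G₁` is smooth and strictly convex on the open unit ball of `ℝ³`. -/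
theorem stmt10 :
    ContDiffOn ℝ (⊤ : ℕ∞) G1 (Metric.ball 0 1) ∧
    StrictConvexOn ℝ (Metric.ball (0 : EuclideanSpace ℝ (Fin 3)) 1) G1 := by
  have hmap : Set.MapsTo (fun ξ : EuclideanSpace ℝ (Fin 3) => ‖ξ‖ ^ 2)
      (Metric.ball 0 1) (Set.Ico (0 : ℝ) 1) := by
    intro ξ hξ
    rw [mem_ball_zero_iff] at hξ
    refine ⟨by positivity, ?_⟩
    show ‖ξ‖ ^ 2 < 1
    nlinarith [norm_nonneg ξ]
  constructor
  · have hq : ContDiffOn ℝ (⊤ : ℕ∞) (fun ξ : EuclideanSpace ℝ (Fin 3) => ‖ξ‖ ^ 2)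
        (Metric.ball 0 1) := (contDiff_norm_sq ℝ).contDiffOn
    have hmap' : Set.MapsTo (fun ξ : EuclideanSpace ℝ (Fin 3) => ‖ξ‖ ^ 2)
        (Metric.ball 0 1) (Metric.ball (0:ℝ) 1) := by
      intro ξ hξ
      rcases hmap hξ with ⟨h1, h2⟩
      rw [mem_ball_zero_iff, Real.norm_eq_abs, abs_lt]
      exact ⟨by linarith, h2⟩
    have := contDiffOn_FG1.comp hq hmap'
    exact this.congr fun ξ hξ => G1_eq_FG1 hξ
  · have := comp_strictConvexOn (convex_Ico 0 1) convexOn_FG1 strictMonoOn_FG1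
      strictConvexOn_normsq hmap
    refine ⟨this.1, fun x hx y hy hxy s t hs ht hst => ?_⟩
    have hc : s • x + t • y ∈ Metric.ball (0 : EuclideanSpace ℝ (Fin 3)) 1 :=
      this.1 hx hy hs.le ht.le hst
    rw [G1_eq_FG1 hc, G1_eq_FG1 hx, G1_eq_FG1 hy]
    exact this.2 hx hy hxy hs ht hst
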